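/- If a Golay number g and a periodic Golay number v exist, then there exists a Hadamard matrix of order 2gv. -/

import Mathlib

open Finset

/-- Zero-extension of a sequence indexed by `ZMod v` to all of `ℤ`,
with `a_i = 0` for `i` outside `[0, v-1]`. -/
def zext (v : ℕ) (A : ZMod v → ℤ) (n : ℤ) : ℤ :=
  if 0 ≤ n ∧ n < (v : ℤ) then A (n : ZMod v) else 0

/-- Nonperiodic autocorrelation function `NAF_A(s) = Σ_{i∈ℤ} a_i a_{i+s}`. -/
def naf (v : ℕ) (A : ZMod v → ℤ) (s : ℤ) : ℤ :=
  ∑ i ∈ Finset.range v, zext v A i * zext v A (i + s)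

/-- Periodic autocorrelation function `PAF_A(s) = Σ_{i∈Z_v} a_i a_{i+s}`. -/
def paf (v : ℕ) (A : ZMod v → ℤ) (s : ZMod v) : ℤ :=
  ∑ i ∈ Finset.range v, A i * A ((i : ZMod v) + s)

/-- Number of ordered pairs `(a,b)` with `a - b = c` and both `a,b` in `X`,
or both in `Y` (counted with multiplicity over the two blocks). -/
def sdsCount (v : ℕ) (X Y : Finset (ZMod v)) (c : ZMod v) : ℕ :=
  ((X ×ˢ X).filter fun p => p.1 - p.2 = c).card +
  ((Y ×ˢ Y).filter fun p => p.1 - p.2 = c).card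

lemma sum_range_zmod (N : ℕ) [NeZero N] (f : ZMod N → ℤ) :
    ∑ i ∈ Finset.range N, f (i : ZMod N) = ∑ x : ZMod N, f x := by
  refine Finset.sum_nbij' (i := fun i => (i : ZMod N)) (j := fun x => x.val) ?_ ?_ ?_ ?_ ?_
  · intro a ha; exact Finset.mem_univ _
  · intro x _; exact Finset.mem_range.mpr (ZMod.val_lt x)
  · intro a ha; exact ZMod.val_cast_of_lt (Finset.mem_range.mp ha)
  · intro x _; exact ZMod.natCast_rightInverse x
  · intro a _; rfl

lemma finsupp_eq_sum_single (N : ℕ) [NeZero N] (x : AddMonoidAlgebra ℤ (ZMod N)) :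
    x = ∑ u : ZMod N, AddMonoidAlgebra.single u (x.coeff u) := by
  ext b
  rw [AddMonoidAlgebra.coeff_sum, Finset.sum_apply']
  simp [AddMonoidAlgebra.coeff_single, Finsupp.single_apply]

lemma mul_apply_zmod (N : ℕ) [NeZero N] (x y : AddMonoidAlgebra ℤ (ZMod N)) (s : ZMod N) :
    (x * y).coeff s = ∑ u : ZMod N, x.coeff u * y.coeff (s - u) := by
  nth_rewrite 1 [finsupp_eq_sum_single N x, finsupp_eq_sum_single N y]
  rw [Finset.sum_mul_sum]
  rw [AddMonoidAlgebra.coeff_sum, Finset.sum_apply']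
  have key : ∀ u : ZMod N, (∑ w : ZMod N, AddMonoidAlgebra.single u (x.coeff u) * AddMonoidAlgebra.single w (y.coeff w)).coeff s
      = x.coeff u * y.coeff (s - u) := by
    intro u
    simp only [AddMonoidAlgebra.single_mul_single]
    rw [AddMonoidAlgebra.coeff_sum, Finset.sum_apply']
    simp only [AddMonoidAlgebra.coeff_single, Finsupp.single_apply]
    rw [Finset.sum_eq_single (s - u)]
    · simp
    · intro w _ hw; rw [if_neg]; intro h; exact hw (by linear_combination h)
    · intro h; exact absurd (Finset.mem_univ _) h
  exact Finset.sum_congr rfl (fun u _ => key u)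

noncomputable def pp (N m step : ℕ) (P : ZMod m → ℤ) : AddMonoidAlgebra ℤ (ZMod N) :=
  ∑ i ∈ Finset.range m, AddMonoidAlgebra.single ((step * i : ℕ) : ZMod N) (P i)

noncomputable def pm (N m step : ℕ) (P : ZMod m → ℤ) : AddMonoidAlgebra ℤ (ZMod N) :=
  ∑ i ∈ Finset.range m, AddMonoidAlgebra.single (-((step * i : ℕ) : ZMod N)) (P i)

lemma coeffProd (N : ℕ) [NeZero N] (m m' : ℕ) (e f : ℕ → ZMod N) (P Q : ℕ → ℤ) (k : ZMod N) :
    ((∑ i ∈ range m, AddMonoidAlgebra.single (e i) (P i)) *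
     (∑ j ∈ range m', AddMonoidAlgebra.single (f j) (Q j)) : AddMonoidAlgebra ℤ (ZMod N)).coeff k
      = ∑ i ∈ range m, ∑ j ∈ range m', if e i + f j = k then P i * Q j else 0 := by
  rw [Finset.sum_mul_sum]
  simp only [AddMonoidAlgebra.single_mul_single]
  rw [AddMonoidAlgebra.coeff_sum, Finset.sum_apply']
  refine Finset.sum_congr rfl fun i _ => ?_
  rw [AddMonoidAlgebra.coeff_sum, Finset.sum_apply']
  simp only [AddMonoidAlgebra.coeff_single, Finsupp.single_apply]

lemma sum_range_eq_sum_diff (m i' : ℕ) (hi' : i' < m) (F : ℤ → ℤ) :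
    ∑ i ∈ range m, F i
      = ∑ d ∈ Finset.Icc (1 - (m:ℤ)) ((m:ℤ) - 1),
          if 0 ≤ (i':ℤ) + d ∧ (i':ℤ) + d < m then F ((i':ℤ) + d) else 0 := by
  rw [← Finset.sum_subset (Finset.Icc_subset_Icc (by omega : 1 - (m:ℤ) ≤ -(i':ℤ))
      (by omega : (m:ℤ) - 1 - i' ≤ (m:ℤ) - 1))
      (fun x hx hnx => by rw [if_neg]; simp only [Finset.mem_Icc] at hx hnx; omega)]
  refine (Finset.sum_nbij' (i := fun i => (i:ℤ) - i') (j := fun d => ((i':ℤ) + d).toNat)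
    ?_ ?_ ?_ ?_ ?_)
  · intro a ha; simp only [Finset.mem_range] at ha; simp only [Finset.mem_Icc]; omega
  · intro d hd; simp only [Finset.mem_Icc] at hd; simp only [Finset.mem_range]; omega
  · intro a ha; simp only [Finset.mem_range] at ha; omega
  · intro d hd; simp only [Finset.mem_Icc] at hd; omega
  · intro a ha; simp only [Finset.mem_range] at ha
    rw [if_pos (by omega)]
    congr 1; omega

lemma double_diff (m : ℕ) (hm : 0 < m) (P : ZMod m → ℤ) (w : ℤ → ℤ) :
    (∑ i ∈ range m, ∑ i' ∈ range m, w ((i:ℤ) - (i':ℤ)) * (P i * P i'))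
      = ∑ d ∈ Finset.Icc (1 - (m:ℤ)) ((m:ℤ) - 1), w d * naf m P d := by
  rw [Finset.sum_comm]
  have step : ∀ i' ∈ range m,
      (∑ i ∈ range m, w ((i:ℤ) - (i':ℤ)) * (P i * P i'))
        = ∑ d ∈ Finset.Icc (1 - (m:ℤ)) ((m:ℤ) - 1),
            w d * (zext m P ((i':ℤ) + d) * P i') := by
    intro i' hi'
    refine Eq.trans ?_ (Eq.trans
      (sum_range_eq_sum_diff m i' (Finset.mem_range.mp hi')
        (fun z => w (z - i') * (P (z : ZMod m) * P i'))) ?_)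
    · refine Finset.sum_congr rfl fun i _ => ?_
      push_cast; try ring
    · refine Finset.sum_congr rfl fun d hd => ?_
      unfold zext
      by_cases h : 0 ≤ (i':ℤ) + d ∧ (i':ℤ) + d < (m:ℤ)
      · rw [if_pos h, if_pos h]; ring
      · rw [if_neg h, if_neg h]; ring
  rw [Finset.sum_congr rfl step, Finset.sum_comm]
  refine Finset.sum_congr rfl fun d _ => ?_
  unfold naf
  rw [Finset.mul_sum]
  refine Finset.sum_congr rfl fun x hx => ?_
  have hxm := Finset.mem_range.mp hx
  have hz : zext m P (x:ℤ) = P (x : ZMod m) := by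
    unfold zext
    rw [if_pos ⟨by positivity, by exact_mod_cast hxm⟩]
    norm_cast
  rw [hz]
  ring

lemma naf_zero (m : ℕ) (P : ZMod m → ℤ) (hP : ∀ i, P i = 1 ∨ P i = -1) :
    naf m P 0 = m := by
  unfold naf
  have : ∀ i ∈ range m, zext m P i * zext m P ((i:ℤ) + 0) = 1 := by
    intro i hi
    have him := Finset.mem_range.mp hi
    have hz : zext m P (i:ℤ) = P (i : ZMod m) := by
      unfold zext
      rw [if_pos ⟨by positivity, by exact_mod_cast him⟩]
      norm_cast
    rw [add_zero, hz]
    rcases hP (i : ZMod m) with h | h <;> rw [h] <;> norm_num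
  rw [Finset.sum_congr rfl this]
  simp

lemma paf_naf (v : ℕ) (hv : 0 < v) (P : ZMod v → ℤ) (t : ZMod v) :
    paf v P t = naf v P (t.val : ℤ) + naf v P ((t.val:ℤ) - v) := by
  haveI : NeZero v := ⟨hv.ne'⟩
  have htv := ZMod.val_lt t
  have ht : ((t.val : ℕ) : ZMod v) = t := ZMod.natCast_rightInverse t
  unfold paf naf
  rw [← Finset.sum_add_distrib]
  refine Finset.sum_congr rfl fun i hi => ?_
  have hiv := Finset.mem_range.mp hi
  have hz : zext v P (i:ℤ) = P (i : ZMod v) := by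
    unfold zext
    rw [if_pos ⟨by positivity, by exact_mod_cast hiv⟩]
    norm_cast
  rw [hz]
  by_cases h : (i:ℤ) + t.val < v
  · have hz1 : zext v P ((i:ℤ) + (t.val:ℤ)) = P ((i : ZMod v) + t) := by
      unfold zext
      rw [if_pos ⟨by positivity, h⟩]
      congr 1
      push_cast
      rw [ht]
    have hz2 : zext v P ((i:ℤ) + ((t.val:ℤ) - v)) = 0 := by
      unfold zext
      rw [if_neg (by omega)]
    rw [hz1, hz2, mul_zero, add_zero]
  · have hz1 : zext v P ((i:ℤ) + (t.val:ℤ)) = 0 := by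
      unfold zext
      rw [if_neg (by omega)]
    have hz2 : zext v P ((i:ℤ) + ((t.val:ℤ) - v)) = P ((i : ZMod v) + t) := by
      unfold zext
      rw [if_pos ⟨by omega, by omega⟩]
      congr 1
      push_cast
      rw [ht, ZMod.natCast_self]
      ring
    rw [hz1, hz2, mul_zero, zero_add]

lemma smul_one_apply (N : ℕ) [NeZero N] (c : ℤ) (s : ZMod N) :
    ((c • (1 : AddMonoidAlgebra ℤ (ZMod N))) : AddMonoidAlgebra ℤ (ZMod N)).coeff s
      = if s = 0 then c else 0 := by
  rw [AddMonoidAlgebra.coeff_smul, Finsupp.smul_apply, AddMonoidAlgebra.one_def,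
    AddMonoidAlgebra.coeff_single, Finsupp.single_apply]
  by_cases h : s = 0
  · rw [if_pos h, if_pos h.symm]; simp
  · rw [if_neg h, if_neg (fun hh => h hh.symm)]; simp

lemma keyA (g v : ℕ) (hg : 0 < g) (hv : 0 < v) [NeZero (g*v)] (A B : ZMod g → ℤ)
    (hA : ∀ i, A i = 1 ∨ A i = -1) (hB : ∀ i, B i = 1 ∨ B i = -1)
    (hnaf : ∀ s : ℤ, s ≠ 0 → naf g A s + naf g B s = 0) :
    pp (g*v) g 1 A * pm (g*v) g 1 A + pp (g*v) g 1 B * pm (g*v) g 1 B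
      = (2 * (g:ℤ)) • (1 : AddMonoidAlgebra ℤ (ZMod (g*v))) := by
  ext s
  rw [AddMonoidAlgebra.coeff_add, Finsupp.add_apply, smul_one_apply]
  unfold pp pm
  rw [coeffProd, coeffProd]
  have hco : ∀ (P : ZMod g → ℤ),
      (∑ i ∈ range g, ∑ j ∈ range g,
        if ((1*i : ℕ) : ZMod (g*v)) + -((1*j : ℕ) : ZMod (g*v)) = s then P i * P j else 0)
      = ∑ i ∈ range g, ∑ j ∈ range g,
          (fun d : ℤ => if ((d : ℤ) : ZMod (g*v)) = s then (1:ℤ) else 0) ((i:ℤ) - (j:ℤ))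
            * (P i * P j) := by
    intro P
    refine Finset.sum_congr rfl fun i _ => Finset.sum_congr rfl fun j _ => ?_
    have hcast : (((i:ℤ) - (j:ℤ) : ℤ) : ZMod (g*v))
        = ((1*i : ℕ) : ZMod (g*v)) + -((1*j : ℕ) : ZMod (g*v)) := by push_cast; ring
    simp only [hcast]
    by_cases h : ((1*i : ℕ) : ZMod (g*v)) + -((1*j : ℕ) : ZMod (g*v)) = s
    · rw [if_pos h, if_pos h, one_mul]
    · rw [if_neg h, if_neg h, zero_mul]
  rw [hco A, hco B,
    double_diff g hg A (fun d : ℤ => if ((d : ℤ) : ZMod (g*v)) = s then (1:ℤ) else 0),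
    double_diff g hg B (fun d : ℤ => if ((d : ℤ) : ZMod (g*v)) = s then (1:ℤ) else 0),
    ← Finset.sum_add_distrib]
  by_cases hs : s = 0
  · rw [if_pos hs]
    subst hs
    rw [Finset.sum_eq_single (0:ℤ)]
    · simp only [Int.cast_zero, Int.cast_ofNat]
      rw [if_pos (by norm_num)]
      rw [naf_zero g A hA, naf_zero g B hB]
      ring
    · intro d hd hd0
      have hdIcc := Finset.mem_Icc.mp hd
      rw [if_neg, zero_mul, zero_mul, add_zero]
      intro hcast
      have hdvd : ((g*v : ℕ) : ℤ) ∣ d := (ZMod.intCast_zmod_eq_zero_iff_dvd d (g*v)).mp hcast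
      have : d = 0 := Int.eq_zero_of_abs_lt_dvd hdvd (by
        have h1 : (1:ℤ) ≤ v := by exact_mod_cast hv
        have h2 : (1:ℤ) ≤ g := by exact_mod_cast hg
        have hgv : (g:ℤ) - 1 < (g:ℤ) * v := by nlinarith
        push_cast
        rw [abs_lt]
        constructor <;> linarith [hdIcc.1, hdIcc.2])
      exact hd0 this
    · intro h
      exact absurd (Finset.mem_Icc.mpr ⟨by omega, by omega⟩) h
  · rw [if_neg hs]
    refine Finset.sum_eq_zero fun d hd => ?_
    by_cases h : ((d : ℤ) : ZMod (g*v)) = s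
    · have hd0 : d ≠ 0 := by
        intro h0
        subst h0
        apply hs
        rw [← h]
        push_cast
        ring
      rw [if_pos h, one_mul, one_mul]
      exact hnaf d hd0
    · rw [if_neg h, zero_mul, zero_mul, add_zero]

lemma keyC (g v : ℕ) (hg : 0 < g) (hv : 0 < v) [NeZero (g*v)] (C D : ZMod v → ℤ)
    (hC : ∀ i, C i = 1 ∨ C i = -1) (hD : ∀ i, D i = 1 ∨ D i = -1)
    (hpaf : ∀ s : ZMod v, s ≠ 0 → paf v C s + paf v D s = 0) :
    pp (g*v) v g C * pm (g*v) v g C + pp (g*v) v g D * pm (g*v) v g D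
      = (2 * (v:ℤ)) • (1 : AddMonoidAlgebra ℤ (ZMod (g*v))) := by
  ext s
  rw [AddMonoidAlgebra.coeff_add, Finsupp.add_apply, smul_one_apply]
  unfold pp pm
  rw [coeffProd, coeffProd]
  have hco : ∀ (P : ZMod v → ℤ),
      (∑ i ∈ range v, ∑ j ∈ range v,
        if ((g*i : ℕ) : ZMod (g*v)) + -((g*j : ℕ) : ZMod (g*v)) = s then P i * P j else 0)
      = ∑ i ∈ range v, ∑ j ∈ range v,
          (fun d : ℤ => if (((g:ℤ)*d : ℤ) : ZMod (g*v)) = s then (1:ℤ) else 0) ((i:ℤ) - (j:ℤ))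
            * (P i * P j) := by
    intro P
    refine Finset.sum_congr rfl fun i _ => Finset.sum_congr rfl fun j _ => ?_
    have hcast : (((g:ℤ) * ((i:ℤ) - (j:ℤ)) : ℤ) : ZMod (g*v))
        = ((g*i : ℕ) : ZMod (g*v)) + -((g*j : ℕ) : ZMod (g*v)) := by push_cast; ring
    simp only [hcast]
    by_cases h : ((g*i : ℕ) : ZMod (g*v)) + -((g*j : ℕ) : ZMod (g*v)) = s
    · rw [if_pos h, if_pos h, one_mul]
    · rw [if_neg h, if_neg h, zero_mul]
  rw [hco C, hco D,
    double_diff v hv C (fun d : ℤ => if (((g:ℤ)*d : ℤ) : ZMod (g*v)) = s then (1:ℤ) else 0),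
    double_diff v hv D (fun d : ℤ => if (((g:ℤ)*d : ℤ) : ZMod (g*v)) = s then (1:ℤ) else 0),
    ← Finset.sum_add_distrib]
  -- condition as divisibility
  have hcond : ∀ d d' : ℤ, (((g:ℤ)*d : ℤ) : ZMod (g*v)) = (((g:ℤ)*d' : ℤ) : ZMod (g*v)) ↔ (v:ℤ) ∣ (d - d') := by
    intro d d'
    rw [← sub_eq_zero, ← Int.cast_sub, ZMod.intCast_zmod_eq_zero_iff_dvd]
    push_cast
    rw [show (g:ℤ)*d - g*d' = (g:ℤ) * (d - d') by ring]
    constructor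
    · intro hh
      exact (mul_dvd_mul_iff_left (by exact_mod_cast hg.ne' : (g:ℤ) ≠ 0)).mp hh
    · intro hh
      exact mul_dvd_mul_left (g:ℤ) hh
  by_cases hs : s = 0
  · rw [if_pos hs]
    subst hs
    rw [Finset.sum_eq_single (0:ℤ)]
    · rw [if_pos (by norm_num)]
      rw [naf_zero v C hC, naf_zero v D hD]
      ring
    · intro d hd hd0
      have hdIcc := Finset.mem_Icc.mp hd
      rw [if_neg, zero_mul, zero_mul, add_zero]
      intro hcast
      have hdvd : (v:ℤ) ∣ d := by
        have := (hcond d 0).mp (by rw [hcast]; norm_num)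
        simpa using this
      have : d = 0 := Int.eq_zero_of_abs_lt_dvd hdvd (by
        rw [abs_lt]; constructor <;> [linarith [hdIcc.1]; linarith [hdIcc.2]])
      exact hd0 this
    · intro h
      exact absurd (Finset.mem_Icc.mpr ⟨by omega, by omega⟩) h
  · rw [if_neg hs]
    -- rewrite into a sum over the filtered set
    have hreform : ∀ d ∈ Finset.Icc (1 - (v:ℤ)) ((v:ℤ)-1),
        ((if (((g:ℤ)*d : ℤ) : ZMod (g*v)) = s then (1:ℤ) else 0) * naf v C d
          + (if (((g:ℤ)*d : ℤ) : ZMod (g*v)) = s then (1:ℤ) else 0) * naf v D d)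
        = if (((g:ℤ)*d : ℤ) : ZMod (g*v)) = s then (naf v C d + naf v D d) else 0 := by
      intro d _
      by_cases h : (((g:ℤ)*d : ℤ) : ZMod (g*v)) = s
      · simp only [if_pos h]; ring
      · simp only [if_neg h]; ring
    rw [Finset.sum_congr rfl hreform, ← Finset.sum_filter]
    set T := (Finset.Icc (1 - (v:ℤ)) ((v:ℤ)-1)).filter
        (fun d => (((g:ℤ)*d : ℤ) : ZMod (g*v)) = s) with hT
    by_cases hne : T = ∅
    · rw [hne, Finset.sum_empty]
    · obtain ⟨d₀, hd₀⟩ := Finset.nonempty_of_ne_empty hne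
      have hd₀m := Finset.mem_filter.mp hd₀
      have hd₀I := Finset.mem_Icc.mp hd₀m.1
      set e := d₀ % (v:ℤ) with he
      have hemod : (v:ℤ) ∣ (d₀ - e) := by
        rw [he, Int.emod_def]; exact ⟨d₀ / v, by ring⟩
      have he0 : 0 ≤ e := Int.emod_nonneg d₀ (by exact_mod_cast hv.ne')
      have helt : e < v := Int.emod_lt_of_pos d₀ (by exact_mod_cast hv)
      have hpe : (((g:ℤ)*e : ℤ) : ZMod (g*v)) = s := by
        rw [← hd₀m.2]
        apply (hcond e d₀).mpr
        exact (dvd_sub_comm).mp hemod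
      have hene : e ≠ 0 := by
        intro h0
        apply hs
        rw [← hpe, h0]
        norm_num
      -- T = {e, e - v}
      have hTeq : T = {e, e - v} := by
        apply Finset.ext
        intro d
        rw [hT, Finset.mem_filter, Finset.mem_Icc, Finset.mem_insert, Finset.mem_singleton]
        constructor
        · rintro ⟨⟨hl, hr⟩, hp⟩
          have hdvd : (v:ℤ) ∣ (d - e) := (hcond d e).mp (by rw [hp, hpe])
          obtain ⟨c, hc⟩ := hdvd
          have hv' : (0:ℤ) < v := by exact_mod_cast hv
          have hc1 : c < 1 := by nlinarith
          have hc2 : (-2:ℤ) < c := by nlinarith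
          interval_cases c
          · right; omega
          · left; omega
        · rintro (rfl | rfl)
          · exact ⟨⟨by omega, by omega⟩, hpe⟩
          · refine ⟨⟨by omega, by omega⟩, ?_⟩
            rw [← hpe]
            apply (hcond (e - v) e).mpr
            exact ⟨-1, by ring⟩
      rw [hTeq, Finset.sum_pair (by omega : e ≠ e - v)]
      -- combine into paf
      set t : ZMod v := ((e : ℤ) : ZMod v) with htdef
      haveI : NeZero v := ⟨hv.ne'⟩
      have htval : ((t.val : ℕ) : ℤ) = e := by
        rw [htdef, ZMod.val_intCast, Int.emod_eq_of_lt he0 helt]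
      have htne : t ≠ 0 := by
        intro h0
        apply hene
        have : (t.val : ℤ) = 0 := by rw [h0]; simp [ZMod.val_zero]
        omega
      have hb1 := paf_naf v hv C t
      have hb2 := paf_naf v hv D t
      rw [htval] at hb1 hb2
      have := hpaf t htne
      rw [hb1, hb2] at this
      linarith

lemma cast_eq_val_iff (N : ℕ) [NeZero N] (n : ℕ) (hn : n < N) (k : ZMod N) :
    ((n:ℕ):ZMod N) = k ↔ n = k.val := by
  constructor
  · intro h; rw [← h, ZMod.val_cast_of_lt hn]
  · intro h; rw [h]; exact ZMod.natCast_rightInverse k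

lemma pm_eq_pp_rev (g v : ℕ) (hg : 0 < g) (hv : 0 < v) [NeZero (g*v)] (Q : ZMod v → ℤ) :
    pp (g*v) v g (fun j => Q (-j)) = pm (g*v) v g Q := by
  unfold pp pm
  refine Finset.sum_nbij' (i := fun a => (v - a) % v) (j := fun a => (v - a) % v) ?_ ?_ ?_ ?_ ?_
  · intro a ha; exact Finset.mem_range.mpr (Nat.mod_lt _ hv)
  · intro a ha; exact Finset.mem_range.mpr (Nat.mod_lt _ hv)
  · intro a ha
    have ha' := Finset.mem_range.mp ha
    rcases Nat.eq_zero_or_pos a with h0 | h0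
    · subst h0; simp [Nat.mod_self]
    · have h1 : (v - a) % v = v - a := Nat.mod_eq_of_lt (by omega)
      rw [h1, Nat.mod_eq_of_lt (by omega)]
      omega
  · intro a ha
    have ha' := Finset.mem_range.mp ha
    rcases Nat.eq_zero_or_pos a with h0 | h0
    · subst h0; simp [Nat.mod_self]
    · have h1 : (v - a) % v = v - a := Nat.mod_eq_of_lt (by omega)
      rw [h1, Nat.mod_eq_of_lt (by omega)]
      omega
  · intro a ha
    have ha' := Finset.mem_range.mp ha
    dsimp only
    have hexp : ((g*a : ℕ) : ZMod (g*v)) = -((g*((v - a) % v) : ℕ) : ZMod (g*v)) := by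
      rw [eq_neg_iff_add_eq_zero, ← Nat.cast_add]
      rcases Nat.eq_zero_or_pos a with h0 | h0
      · subst h0; simp [Nat.mod_self]
      · rw [Nat.mod_eq_of_lt (by omega)]
        rw [show g*a + g*(v-a) = g*v by rw [← Nat.mul_add]; congr 1; omega]
        exact ZMod.natCast_self _
    have hval : Q (-(a : ZMod v)) = Q ((((v - a) % v : ℕ)) : ZMod v) := by
      congr 1
      rcases Nat.eq_zero_or_pos a with h0 | h0
      · subst h0; simp [Nat.mod_self]
      · rw [Nat.mod_eq_of_lt (by omega)]
        have : ((v - a : ℕ) : ZMod v) = (v : ZMod v) - (a : ZMod v) := by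
          rw [← Nat.cast_sub (by omega)]
        rw [this, ZMod.natCast_self]
        ring
    rw [hexp, hval]


lemma coeff_pp_pp (g v : ℕ) (hg : 0 < g) (hv : 0 < v) [NeZero (g*v)]
    (P : ZMod g → ℤ) (Q : ZMod v → ℤ) (k : ZMod (g*v)) :
    (pp (g*v) g 1 P * pp (g*v) v g Q).coeff k
      = P ((k.val % g : ℕ)) * Q ((k.val / g : ℕ)) := by
  have hkv : k.val < g*v := ZMod.val_lt k
  have huniq : ∀ i j : ℕ, i < g → j < v →
      ((( (1*i:ℕ) : ZMod (g*v))) + ((g*j : ℕ) : ZMod (g*v)) = k ↔ i = k.val % g ∧ j = k.val / g) := by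
    intro i j hi hj
    rw [← Nat.cast_add]
    have hlt : 1*i + g*j < g*v := by
      have h1 : j + 1 ≤ v := hj
      have h2 : g*(j+1) ≤ g*v := Nat.mul_le_mul_left g h1
      rw [Nat.mul_succ] at h2
      omega
    rw [cast_eq_val_iff (g*v) _ hlt k]
    constructor
    · intro h
      have h1 : (1*i + g*j) % g = i := by
        rw [one_mul, Nat.add_mul_mod_self_left, Nat.mod_eq_of_lt hi]
      have h2 : (1*i + g*j) / g = j := by
        rw [one_mul, Nat.add_mul_div_left _ _ hg, Nat.div_eq_of_lt hi]
        omega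
      rw [h] at h1 h2
      exact ⟨h1.symm, h2.symm⟩
    · rintro ⟨rfl, rfl⟩
      rw [one_mul]
      exact Nat.mod_add_div _ _
  unfold pp
  rw [coeffProd]
  rw [Finset.sum_eq_single (k.val % g)]
  · rw [Finset.sum_eq_single (k.val / g)]
    · rw [if_pos ((huniq _ _ (Nat.mod_lt _ hg) (Nat.div_lt_of_lt_mul (by omega))).mpr ⟨rfl, rfl⟩)]
    · intro j hj hne
      rw [if_neg]
      intro hcond
      exact hne ((huniq _ _ (Nat.mod_lt _ hg) (Finset.mem_range.mp hj)).mp hcond).2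
    · intro h
      exact absurd (Finset.mem_range.mpr (Nat.div_lt_of_lt_mul (by omega))) h
  · intro i hi hne
    refine Finset.sum_eq_zero fun j hj => ?_
    rw [if_neg]
    intro hcond
    exact hne ((huniq _ _ (Finset.mem_range.mp hi) (Finset.mem_range.mp hj)).mp hcond).1
  · intro h
    exact absurd (Finset.mem_range.mpr (Nat.mod_lt _ hg)) h

/-- The "halved" sequences. -/
def half1 (g : ℕ) (A B : ZMod g → ℤ) : ZMod g → ℤ := fun i => if A i = B i then A i else 0
def half2 (g : ℕ) (A B : ZMod g → ℤ) : ZMod g → ℤ := fun i => if A i = B i then 0 else A i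

lemma keyHalf (g v : ℕ) (hg : 0 < g) (hv : 0 < v) [NeZero (g*v)] (A B : ZMod g → ℤ)
    (hA : ∀ i, A i = 1 ∨ A i = -1) (hB : ∀ i, B i = 1 ∨ B i = -1)
    (hnaf : ∀ s : ℤ, s ≠ 0 → naf g A s + naf g B s = 0) :
    pp (g*v) g 1 (half1 g A B) * pm (g*v) g 1 (half1 g A B)
      + pp (g*v) g 1 (half2 g A B) * pm (g*v) g 1 (half2 g A B)
      = ((g:ℤ)) • (1 : AddMonoidAlgebra ℤ (ZMod (g*v))) := by
  set a := half1 g A B with hadef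
  set b := half2 g A B with hbdef
  have e1 : ∀ i, A i = a i + b i := by
    intro i
    by_cases h : A i = B i <;> simp only [hadef, hbdef, half1, half2, if_pos, if_neg, h,
      if_true, if_false, ite_true, ite_false] <;> ring_nf <;> omega
  have e2 : ∀ i, B i = a i - b i := by
    intro i
    have h1 := hA i; have h2 := hB i
    by_cases h : A i = B i <;> simp only [hadef, hbdef, half1, half2, h,
      if_true, if_false, ite_true, ite_false] <;> omega
  have hppA : pp (g*v) g 1 A = pp (g*v) g 1 a + pp (g*v) g 1 b := by
    unfold pp
    rw [← Finset.sum_add_distrib]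
    refine Finset.sum_congr rfl fun i _ => ?_
    rw [e1 (i : ZMod g)]
    exact AddMonoidAlgebra.single_add _ _ _
  have hpmA : pm (g*v) g 1 A = pm (g*v) g 1 a + pm (g*v) g 1 b := by
    unfold pm
    rw [← Finset.sum_add_distrib]
    refine Finset.sum_congr rfl fun i _ => ?_
    rw [e1 (i : ZMod g)]
    exact AddMonoidAlgebra.single_add _ _ _
  have hppB : pp (g*v) g 1 B = pp (g*v) g 1 a - pp (g*v) g 1 b := by
    unfold pp
    rw [← Finset.sum_sub_distrib]
    refine Finset.sum_congr rfl fun i _ => ?_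
    rw [e2 (i : ZMod g)]
    exact AddMonoidAlgebra.single_sub _ _ _
  have hpmB : pm (g*v) g 1 B = pm (g*v) g 1 a - pm (g*v) g 1 b := by
    unfold pm
    rw [← Finset.sum_sub_distrib]
    refine Finset.sum_congr rfl fun i _ => ?_
    rw [e2 (i : ZMod g)]
    exact AddMonoidAlgebra.single_sub _ _ _
  have hkey := keyA g v hg hv A B hA hB hnaf
  rw [hppA, hpmA, hppB, hpmB] at hkey
  have hexp : (pp (g*v) g 1 a + pp (g*v) g 1 b) * (pm (g*v) g 1 a + pm (g*v) g 1 b)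
      + (pp (g*v) g 1 a - pp (g*v) g 1 b) * (pm (g*v) g 1 a - pm (g*v) g 1 b)
      = (2:ℤ) • (pp (g*v) g 1 a * pm (g*v) g 1 a + pp (g*v) g 1 b * pm (g*v) g 1 b) := by
    rw [two_smul]
    ring
  rw [hexp] at hkey
  have h2g : (2 * (g:ℤ)) • (1 : AddMonoidAlgebra ℤ (ZMod (g*v)))
      = (2:ℤ) • (((g:ℤ)) • (1 : AddMonoidAlgebra ℤ (ZMod (g*v)))) := by
    rw [smul_smul]
  rw [h2g] at hkey
  have hinj : ∀ x y : AddMonoidAlgebra ℤ (ZMod (g*v)), (2:ℤ) • x = (2:ℤ) • y → x = y := by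
    intro x y hxy
    ext u
    have h2 : (2:ℤ) • (x.coeff u) = (2:ℤ) • (y.coeff u) := by
      rw [← Finsupp.smul_apply, ← Finsupp.smul_apply, ← AddMonoidAlgebra.coeff_smul,
        ← AddMonoidAlgebra.coeff_smul, hxy]
    simp only [smul_eq_mul] at h2
    omega
  exact hinj _ _ hkey

lemma cast_inj_lt (N : ℕ) [NeZero N] {a b : ℕ} (ha : a < N) (hb : b < N) :
    ((a : ZMod N) = (b : ZMod N)) ↔ a = b := by
  rw [ZMod.natCast_eq_natCast_iff', Nat.mod_eq_of_lt ha, Nat.mod_eq_of_lt hb]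

lemma cast_inj_ge (N : ℕ) [NeZero N] {a b : ℕ} (ha : N ≤ a) (ha2 : a < N + N)
    (hb : N ≤ b) (hb2 : b < N + N) :
    ((a : ZMod N) = (b : ZMod N)) ↔ a = b := by
  rw [ZMod.natCast_eq_natCast_iff', Nat.mod_eq_sub_mod ha, Nat.mod_eq_sub_mod hb,
    Nat.mod_eq_of_lt (by omega), Nat.mod_eq_of_lt (by omega)]
  omega

lemma hadamard_two_circ (N : ℕ) [NeZero N] (hN : 0 < N) (E F : ZMod N → ℤ)
    (hE : ∀ k, E k = 1 ∨ E k = -1) (hF : ∀ k, F k = 1 ∨ F k = -1)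
    (hsum : ∀ s : ZMod N,
      (∑ x : ZMod N, (E x * E (x+s) + F x * F (x+s))) = if s = 0 then (2*(N:ℤ)) else 0)
    (M : ℕ) (hM : M = 2*N) :
    ∃ H : Matrix (Fin M) (Fin M) ℤ, (∀ i j, H i j = 1 ∨ H i j = -1) ∧
      H * H.transpose = ((M:ℤ)) • (1 : Matrix (Fin M) (Fin M) ℤ) := by
  set W : ℕ → ℕ → ℤ := fun pt qt =>
    if pt < N then
      (if qt < N then E ((qt:ZMod N) - (pt:ZMod N)) else F ((qt:ZMod N) - (pt:ZMod N)))
    else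
      (if qt < N then F ((pt:ZMod N) - (qt:ZMod N)) else -E ((pt:ZMod N) - (qt:ZMod N)))
    with hW
  refine ⟨Matrix.of fun p q => W p.val q.val, ?_, ?_⟩
  · intro p q
    rw [Matrix.of_apply, hW]
    dsimp only
    split <;> split
    · exact hE _
    · exact hF _
    · exact hF _
    · rcases hE (((p:Fin M).val : ZMod N) - ((q:Fin M).val : ZMod N)) with h | h <;>
        rw [h] <;> norm_num
  · ext p q
    rw [Matrix.mul_apply]
    simp only [Matrix.transpose_apply, Matrix.of_apply]
    have hps : (∑ k : Fin M, W p.val k.val * W q.val k.val)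
        = ∑ t ∈ Finset.range M, W p.val t * W q.val t :=
      Fin.sum_univ_eq_sum_range (fun t => W p.val t * W q.val t) M
    have hRHS : ((M:ℤ) • (1 : Matrix (Fin M) (Fin M) ℤ)) p q
        = if p.val = q.val then ((M:ℤ)) else 0 := by
      rw [Matrix.smul_apply, Matrix.one_apply]
      by_cases h : p = q
      · rw [if_pos h, if_pos (by rw [h])]
        simp
      · rw [if_neg h, if_neg (fun hh => h (Fin.val_injective hh))]
        simp
    rw [hps, hRHS]
    have hpv : p.val < M := p.isLt
    have hqv : q.val < M := q.isLt
    generalize hgp : p.val = pv at hpv ⊢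
    generalize hgq : q.val = qv at hqv ⊢
    rw [hM] at hpv hqv
    rw [hM, two_mul, Finset.sum_range_add]
    set pc : ZMod N := (pv : ZMod N) with hpc
    set qc : ZMod N := (qv : ZMod N) with hqc
    have hNcast : ∀ t : ℕ, ((N + t : ℕ) : ZMod N) = (t : ZMod N) := by
      intro t; push_cast [ZMod.natCast_self]; ring
    by_cases hp : pv < N <;> by_cases hq : qv < N
    · -- top-left: E/E and F/F
      have h1 : ∑ t ∈ Finset.range N, W pv t * W qv t
          = ∑ x : ZMod N, E (x - pc) * E (x - qc) := by
        rw [← sum_range_zmod N (fun x => E (x - pc) * E (x - qc))]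
        refine Finset.sum_congr rfl fun t ht => ?_
        have htN := Finset.mem_range.mp ht
        rw [hW]; dsimp only
        rw [if_pos hp, if_pos htN, if_pos hq, if_pos htN]
      have h2 : ∑ t ∈ Finset.range N, W pv (N + t) * W qv (N + t)
          = ∑ x : ZMod N, F (x - pc) * F (x - qc) := by
        rw [← sum_range_zmod N (fun x => F (x - pc) * F (x - qc))]
        refine Finset.sum_congr rfl fun t ht => ?_
        rw [hW]; dsimp only
        rw [if_pos hp, if_neg (by omega), if_pos hq, if_neg (by omega), hNcast t]
      rw [h1, h2, ← Finset.sum_add_distrib]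
      have h3 : ∑ x : ZMod N, (E (x - pc) * E (x - qc) + F (x - pc) * F (x - qc))
          = ∑ y : ZMod N, (E y * E (y + (pc - qc)) + F y * F (y + (pc - qc))) := by
        refine Fintype.sum_equiv (Equiv.subRight pc) _ _ fun x => ?_
        simp only [Equiv.subRight_apply]
        rw [show x - qc = x - pc + (pc - qc) by ring]
      rw [h3, hsum (pc - qc)]
      have heq : (pc - qc = 0) ↔ (pv = qv) := by
        rw [sub_eq_zero, hpc, hqc, cast_inj_lt N hp hq]
      by_cases hpq : pv = qv
      · rw [if_pos hpq, if_pos (heq.mpr hpq)]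
        push_cast
        ring
      · rw [if_neg hpq, if_neg (fun hh => hpq (heq.mp hh))]
    · -- top-right: zero
      have h1 : ∑ t ∈ Finset.range N, W pv t * W qv t
          = ∑ x : ZMod N, E (x - pc) * F (qc - x) := by
        rw [← sum_range_zmod N (fun x => E (x - pc) * F (qc - x))]
        refine Finset.sum_congr rfl fun t ht => ?_
        have htN := Finset.mem_range.mp ht
        rw [hW]; dsimp only
        rw [if_pos hp, if_pos htN, if_neg hq, if_pos htN]
      have h2 : ∑ t ∈ Finset.range N, W pv (N + t) * W qv (N + t)
          = ∑ x : ZMod N, F (x - pc) * (-E (qc - x)) := by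
        rw [← sum_range_zmod N (fun x => F (x - pc) * (-E (qc - x)))]
        refine Finset.sum_congr rfl fun t ht => ?_
        rw [hW]; dsimp only
        rw [if_pos hp, if_neg (by omega), if_neg hq, if_neg (by omega), hNcast t]
      rw [h1, h2]
      have h3 : ∑ x : ZMod N, F (x - pc) * (-E (qc - x))
          = -∑ x : ZMod N, E (x - pc) * F (qc - x) := by
        rw [← Finset.sum_neg_distrib]
        refine Fintype.sum_equiv (Equiv.subLeft (pc + qc)) _ _ fun x => ?_
        simp only [Equiv.subLeft_apply]
        have e1 : pc + qc - x - pc = qc - x := by ring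
        have e2 : qc - (pc + qc - x) = x - pc := by ring
        rw [e1, e2]
        ring
      rw [h3, add_neg_cancel, if_neg (by omega)]
    · -- bottom-left: zero
      have h1 : ∑ t ∈ Finset.range N, W pv t * W qv t
          = ∑ x : ZMod N, F (pc - x) * E (x - qc) := by
        rw [← sum_range_zmod N (fun x => F (pc - x) * E (x - qc))]
        refine Finset.sum_congr rfl fun t ht => ?_
        have htN := Finset.mem_range.mp ht
        rw [hW]; dsimp only
        rw [if_neg hp, if_pos htN, if_pos hq, if_pos htN]
      have h2 : ∑ t ∈ Finset.range N, W pv (N + t) * W qv (N + t)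
          = ∑ x : ZMod N, (-E (pc - x)) * F (x - qc) := by
        rw [← sum_range_zmod N (fun x => (-E (pc - x)) * F (x - qc))]
        refine Finset.sum_congr rfl fun t ht => ?_
        rw [hW]; dsimp only
        rw [if_neg hp, if_neg (by omega), if_pos hq, if_neg (by omega), hNcast t]
      rw [h1, h2]
      have h3 : ∑ x : ZMod N, (-E (pc - x)) * F (x - qc)
          = -∑ x : ZMod N, F (pc - x) * E (x - qc) := by
        rw [← Finset.sum_neg_distrib]
        refine Fintype.sum_equiv (Equiv.subLeft (pc + qc)) _ _ fun x => ?_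
        simp only [Equiv.subLeft_apply]
        have e1 : pc - (pc + qc - x) = x - qc := by ring
        have e2 : pc + qc - x - qc = pc - x := by ring
        rw [e1, e2]
        ring
      rw [h3, add_neg_cancel, if_neg (by omega)]
    · -- bottom-right
      have h1 : ∑ t ∈ Finset.range N, W pv t * W qv t
          = ∑ x : ZMod N, F (pc - x) * F (qc - x) := by
        rw [← sum_range_zmod N (fun x => F (pc - x) * F (qc - x))]
        refine Finset.sum_congr rfl fun t ht => ?_
        have htN := Finset.mem_range.mp ht
        rw [hW]; dsimp only
        rw [if_neg hp, if_pos htN, if_neg hq, if_pos htN]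
      have h2 : ∑ t ∈ Finset.range N, W pv (N + t) * W qv (N + t)
          = ∑ x : ZMod N, (-E (pc - x)) * (-E (qc - x)) := by
        rw [← sum_range_zmod N (fun x => (-E (pc - x)) * (-E (qc - x)))]
        refine Finset.sum_congr rfl fun t ht => ?_
        rw [hW]; dsimp only
        rw [if_neg hp, if_neg (by omega), if_neg hq, if_neg (by omega), hNcast t]
      rw [h1, h2, ← Finset.sum_add_distrib]
      have h3 : ∑ x : ZMod N, (F (pc - x) * F (qc - x) + (-E (pc - x)) * (-E (qc - x)))
          = ∑ y : ZMod N, (E y * E (y + (qc - pc)) + F y * F (y + (qc - pc))) := by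
        refine Fintype.sum_equiv (Equiv.subLeft pc) _ _ fun x => ?_
        simp only [Equiv.subLeft_apply]
        rw [show qc - x = pc - x + (qc - pc) by ring]
        ring
      rw [h3, hsum (qc - pc)]
      have heq : (qc - pc = 0) ↔ (pv = qv) := by
        rw [sub_eq_zero, hpc, hqc,
          cast_inj_ge N (by omega) (by omega) (by omega) (by omega)]
        constructor <;> intro hh <;> [exact hh.symm; exact hh.symm]
      by_cases hpq : pv = qv
      · rw [if_pos hpq, if_pos (heq.mpr hpq)]
        push_cast
        ring
      · rw [if_neg hpq, if_neg (fun hh => hpq (heq.mp hh))]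

lemma mm_apply (N : ℕ) [NeZero N] (m m' st st' : ℕ) (P : ZMod m → ℤ) (Q : ZMod m' → ℤ)
    (k : ZMod N) :
    (pm N m st P * pm N m' st' Q).coeff k = (pp N m st P * pp N m' st' Q).coeff (-k) := by
  unfold pp pm
  rw [coeffProd, coeffProd]
  refine Finset.sum_congr rfl fun i _ => Finset.sum_congr rfl fun j _ => ?_
  refine if_congr ?_ rfl rfl
  constructor <;> intro h <;> linear_combination -h

lemma mp_apply (N : ℕ) [NeZero N] (m m' st st' : ℕ) (P : ZMod m → ℤ) (Q : ZMod m' → ℤ)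
    (k : ZMod N) :
    (pm N m st P * pp N m' st' Q).coeff k = (pp N m st P * pm N m' st' Q).coeff (-k) := by
  unfold pp pm
  rw [coeffProd, coeffProd]
  refine Finset.sum_congr rfl fun i _ => Finset.sum_congr rfl fun j _ => ?_
  refine if_congr ?_ rfl rfl
  constructor <;> intro h <;> linear_combination -h

lemma entry_pm {x y c d : ℤ}
    (h : (x = 1 ∨ x = -1) ∧ y = 0 ∨ x = 0 ∧ (y = 1 ∨ y = -1))
    (hc : c = 1 ∨ c = -1) (hd : d = 1 ∨ d = -1) :
    x*c + y*d = 1 ∨ x*c + y*d = -1 := by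
  rcases h with ⟨hx, hy⟩ | ⟨hx, hy⟩ <;> rcases hc with rfl | rfl <;> rcases hd with rfl | rfl <;>
    rcases (by tauto : x = 1 ∨ x = -1 ∨ x = 0) with rfl | rfl | rfl <;>
      rcases (by tauto : y = 1 ∨ y = -1 ∨ y = 0) with rfl | rfl | rfl <;> omega

theorem hadamard_of_golay_and_periodic_golay (g v : ℕ) (hg : 0 < g) (hv : 0 < v)
    (hGolay : ∃ A B : ZMod g → ℤ,
      (∀ i, A i = 1 ∨ A i = -1) ∧ (∀ i, B i = 1 ∨ B i = -1) ∧
      ∀ s : ℤ, s ≠ 0 → naf g A s + naf g B s = 0)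
    (hPeriodic : ∃ C D : ZMod v → ℤ,
      (∀ i, C i = 1 ∨ C i = -1) ∧ (∀ i, D i = 1 ∨ D i = -1) ∧
      ∀ s : ZMod v, s ≠ 0 → paf v C s + paf v D s = 0) :
    ∃ H : Matrix (Fin (2 * g * v)) (Fin (2 * g * v)) ℤ,
      (∀ i j, H i j = 1 ∨ H i j = -1) ∧
      H * H.transpose
        = ((2 * g * v : ℤ)) • (1 : Matrix (Fin (2 * g * v)) (Fin (2 * g * v)) ℤ) := by
  obtain ⟨A, B, hA, hB, hnaf⟩ := hGolay
  obtain ⟨C, D, hC, hD, hpaf⟩ := hPeriodic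
  haveI : NeZero (g*v) := ⟨by positivity⟩
  let a := half1 g A B
  let b := half2 g A B
  let xa := pp (g*v) g 1 a
  let xa' := pm (g*v) g 1 a
  let xb := pp (g*v) g 1 b
  let xb' := pm (g*v) g 1 b
  let xc := pp (g*v) v g C
  let xc' := pm (g*v) v g C
  let xd := pp (g*v) v g D
  let xd' := pm (g*v) v g D
  let xE : AddMonoidAlgebra ℤ (ZMod (g*v)) := xa * xc + xb * xd'
  let xE' : AddMonoidAlgebra ℤ (ZMod (g*v)) := xa' * xc' + xb' * xd
  let xF : AddMonoidAlgebra ℤ (ZMod (g*v)) := xa * xd - xb * xc'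
  let xF' : AddMonoidAlgebra ℤ (ZMod (g*v)) := xa' * xd' - xb' * xc
  have hmain : xE * xE' + xF * xF' = ((2*((g*v : ℕ):ℤ))) • 1 := by
    have hexp : xE * xE' + xF * xF' = (xa*xa' + xb*xb') * (xc*xc' + xd*xd') := by
      show (xa * xc + xb * xd') * (xa' * xc' + xb' * xd)
          + (xa * xd - xb * xc') * (xa' * xd' - xb' * xc)
        = (xa*xa' + xb*xb') * (xc*xc' + xd*xd')
      ring
    rw [hexp]
    have h1 : xa*xa' + xb*xb' = ((g:ℤ)) • 1 := keyHalf g v hg hv A B hA hB hnaf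
    have h2 : xc*xc' + xd*xd' = (2*(v:ℤ)) • 1 := keyC g v hg hv C D hC hD hpaf
    rw [h1, h2, smul_mul_smul, one_mul]
    congr 1
    push_cast
    ring
  let E : ZMod (g*v) → ℤ := fun k => xE.coeff k
  let F : ZMod (g*v) → ℤ := fun k => xF.coeff k
  have hstarE : ∀ k, xE'.coeff k = xE.coeff (-k) := by
    intro k
    show (xa' * xc' + xb' * xd).coeff k = (xa * xc + xb * xd').coeff (-k)
    rw [AddMonoidAlgebra.coeff_add, AddMonoidAlgebra.coeff_add, Finsupp.add_apply, Finsupp.add_apply]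
    rw [mm_apply (g*v) g v 1 g a C k, mp_apply (g*v) g v 1 g b D k]
  have hstarF : ∀ k, xF'.coeff k = xF.coeff (-k) := by
    intro k
    show (xa' * xd' - xb' * xc).coeff k = (xa * xd - xb * xc').coeff (-k)
    rw [AddMonoidAlgebra.coeff_sub, AddMonoidAlgebra.coeff_sub, Finsupp.sub_apply, Finsupp.sub_apply]
    rw [mm_apply (g*v) g v 1 g a D k, mp_apply (g*v) g v 1 g b C k]
  have hEF : ∀ s : ZMod (g*v),
      (∑ x : ZMod (g*v), (E x * E (x+s) + F x * F (x+s)))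
        = if s = 0 then (2*((g*v : ℕ):ℤ)) else 0 := by
    intro s
    have h1 : ∑ x : ZMod (g*v), E x * E (x+s) = (xE * xE').coeff (-s) := by
      rw [mul_apply_zmod]
      refine Finset.sum_congr rfl fun u _ => ?_
      rw [show -s - u = -(u + s) by ring, hstarE (-(u+s)), neg_neg]
    have h2 : ∑ x : ZMod (g*v), F x * F (x+s) = (xF * xF').coeff (-s) := by
      rw [mul_apply_zmod]
      refine Finset.sum_congr rfl fun u _ => ?_
      rw [show -s - u = -(u + s) by ring, hstarF (-(u+s)), neg_neg]
    rw [Finset.sum_add_distrib, h1, h2, ← Finsupp.add_apply, ← AddMonoidAlgebra.coeff_add, hmain, smul_one_apply]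
    simp only [neg_eq_zero]
  have hhalves : ∀ i : ZMod g,
      (a i = 1 ∨ a i = -1) ∧ b i = 0 ∨ a i = 0 ∧ (b i = 1 ∨ b i = -1) := by
    intro i
    have ha : a i = if A i = B i then A i else 0 := rfl
    have hb : b i = if A i = B i then 0 else A i := rfl
    by_cases h : A i = B i
    · left
      rw [ha, hb, if_pos h, if_pos h]
      exact ⟨hA i, rfl⟩
    · right
      rw [ha, hb, if_neg h, if_neg h]
      exact ⟨rfl, hA i⟩
  have hDrev : xd' = pp (g*v) v g (fun j => D (-j)) := (pm_eq_pp_rev g v hg hv D).symm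
  have hCrev : xc' = pp (g*v) v g (fun j => C (-j)) := (pm_eq_pp_rev g v hg hv C).symm
  have hE1 : ∀ k, E k = 1 ∨ E k = -1 := by
    intro k
    have hcoeff : E k = a ((k.val % g : ℕ)) * C ((k.val / g : ℕ))
        + b ((k.val % g : ℕ)) * D (-((k.val / g : ℕ) : ZMod v)) := by
      show (xa * xc + xb * xd').coeff k = _
      rw [AddMonoidAlgebra.coeff_add, Finsupp.add_apply, hDrev, coeff_pp_pp g v hg hv, coeff_pp_pp g v hg hv]
    rw [hcoeff]
    exact entry_pm (hhalves _) (hC _) (hD _)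
  have hF1 : ∀ k, F k = 1 ∨ F k = -1 := by
    intro k
    have hcoeff : F k = a ((k.val % g : ℕ)) * D ((k.val / g : ℕ))
        + (- b ((k.val % g : ℕ))) * C (-((k.val / g : ℕ) : ZMod v)) := by
      show (xa * xd - xb * xc').coeff k = _
      rw [AddMonoidAlgebra.coeff_sub, Finsupp.sub_apply, hCrev, coeff_pp_pp g v hg hv, coeff_pp_pp g v hg hv]
      ring
    rw [hcoeff]
    refine entry_pm ?_ (hD _) (hC _)
    rcases hhalves ((k.val % g : ℕ) : ZMod g) with ⟨h1, h2⟩ | ⟨h1, h2⟩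
    · left
      exact ⟨h1, by rw [h2]; ring⟩
    · right
      refine ⟨h1, ?_⟩
      rcases h2 with h2 | h2 <;> rw [h2] <;> norm_num
  obtain ⟨H, hH1, hH2⟩ := hadamard_two_circ (g*v) (by positivity) E F hE1 hF1 hEF
    (2*g*v) (by rw [Nat.mul_assoc])
  refine ⟨H, hH1, ?_⟩
  have hc : ((2*g*v : ℕ) : ℤ) = (2*(g:ℤ)*v) := by push_cast; ring
  rw [hH2, hc]
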